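/- Let n ≥ 1 and let x, y ∈ Bⁿ be such that c_{Bⁿ}(x,y) < 2. Then j_{Bⁿ}(x,y) ≤ 4·artanh(c_{Bⁿ}(x,y)/2), where artanh is the inverse hyperbolic tangent. -/

import Mathlib

open Metric Set Real

/-- The triangular ratio metric of `G`. -/
noncomputable def sMet {E : Type*} [MetricSpace E] (G : Set E) (x y : E) : ℝ :=
  sSup ((fun z => dist x y / (dist x z + dist z y)) '' frontier G)

/-- The Cassinian metric of `G`. -/
noncomputable def cMet {E : Type*} [MetricSpace E] (G : Set E) (x y : E) : ℝ :=
  sSup ((fun z => dist x y / (dist x z * dist z y)) '' frontier G)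

/-- The distance ratio metric of `G`. -/
noncomputable def jMet {E : Type*} [MetricSpace E] (G : Set E) (x y : E) : ℝ :=
  Real.log (1 + dist x y / min (infDist x (frontier G)) (infDist y (frontier G)))
/-- The inverse hyperbolic tangent, `artanh t = (1/2)·log((1+t)/(1−t))`. -/
noncomputable def artanh (t : ℝ) : ℝ := (1 / 2) * Real.log ((1 + t) / (1 - t))

/-- for `x, y ∈ Bⁿ` with `c_{Bⁿ}(x,y) < 2`,
`j_{Bⁿ}(x,y) ≤ 4·artanh(c_{Bⁿ}(x,y)/2)`. -/
lemma key_log (c : ℝ) (h0 : 0 ≤ c) (h2 : c < 2) :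
    Real.log (1 + 2 * c) ≤ 4 * _root_.artanh (c / 2) := by
  have h2c : (0:ℝ) < 2 - c := by linarith
  have heq : _root_.artanh (c / 2) = (1 / 2) * Real.log ((2 + c) / (2 - c)) := by
    unfold _root_.artanh
    congr 2
    rw [show (1 + c/2 : ℝ) = (2+c)/2 by ring, show (1 - c/2 : ℝ) = (2-c)/2 by ring]
    field_simp
  rw [heq]
  have h1 : 1 + 2 * c ≤ ((2 + c) / (2 - c)) ^ 2 := by
    rw [div_pow, le_div_iff₀ (by positivity)]
    nlinarith [mul_nonneg (mul_nonneg h0 h0) (by linarith : (0:ℝ) ≤ 4 - c)]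
  calc Real.log (1 + 2 * c) ≤ Real.log (((2 + c) / (2 - c)) ^ 2) :=
        Real.log_le_log (by positivity) h1
    _ = 2 * Real.log ((2 + c) / (2 - c)) := by
        rw [Real.log_pow]; push_cast; ring
    _ = 4 * (1 / 2 * Real.log ((2 + c) / (2 - c))) := by ring

theorem jMet_le_four_artanh (n : ℕ) (hn : 1 ≤ n) (x y : EuclideanSpace ℝ (Fin n))
    (hx : x ∈ Metric.ball (0 : EuclideanSpace ℝ (Fin n)) 1)
    (hy : y ∈ Metric.ball (0 : EuclideanSpace ℝ (Fin n)) 1)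
    (hc : cMet (Metric.ball (0 : EuclideanSpace ℝ (Fin n)) 1) x y < 2) :
    jMet (Metric.ball (0 : EuclideanSpace ℝ (Fin n)) 1) x y ≤
      4 * _root_.artanh (cMet (Metric.ball (0 : EuclideanSpace ℝ (Fin n)) 1) x y / 2) := by
  haveI : Nonempty (Fin n) := ⟨⟨0, hn⟩⟩
  have hF : frontier (Metric.ball (0 : EuclideanSpace ℝ (Fin n)) 1)
      = Metric.sphere (0 : EuclideanSpace ℝ (Fin n)) 1 := frontier_ball 0 one_ne_zero
  set F := frontier (Metric.ball (0 : EuclideanSpace ℝ (Fin n)) 1) with hFdef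
  have hsne : F.Nonempty := by
    rw [hF]; exact NormedSpace.sphere_nonempty.2 zero_le_one
  have hscl : IsClosed F := hF ▸ isClosed_sphere
  have hscpt : IsCompact F := hF ▸ isCompact_sphere 0 1
  have hxF : x ∉ F := by
    rw [hF]; intro h
    simp only [mem_sphere, dist_zero_right] at h
    simp only [mem_ball, dist_zero_right] at hx
    linarith
  have hyF : y ∉ F := by
    rw [hF]; intro h
    simp only [mem_sphere, dist_zero_right] at h
    simp only [mem_ball, dist_zero_right] at hy
    linarith
  have hdx : 0 < infDist x F := (hscl.notMem_iff_infDist_pos hsne).1 hxF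
  have hdy : 0 < infDist y F := (hscl.notMem_iff_infDist_pos hsne).1 hyF
  set c : ℝ := cMet (Metric.ball (0 : EuclideanSpace ℝ (Fin n)) 1) x y with hcdef
  -- the image set is bounded above
  have hbdd : BddAbove ((fun z => dist x y / (dist x z * dist z y)) '' F) := by
    refine ⟨dist x y / (infDist x F * infDist y F), ?_⟩
    rintro _ ⟨z, hz, rfl⟩
    have h1 : infDist x F ≤ dist x z := infDist_le_dist_of_mem hz
    have h2 : infDist y F ≤ dist z y := dist_comm z y ▸ infDist_le_dist_of_mem hz
    exact div_le_div_of_nonneg_left dist_nonneg (by positivity)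
      (mul_le_mul h1 h2 (le_of_lt hdy) dist_nonneg)
  -- key bound: dist x y / min ≤ 2 * c
  have hkey : dist x y / min (infDist x F) (infDist y F) ≤ 2 * c := by
    have hdist2 : ∀ z ∈ F, ∀ w : EuclideanSpace ℝ (Fin n),
        w ∈ Metric.ball (0 : EuclideanSpace ℝ (Fin n)) 1 → dist z w ≤ 2 := by
      intro z hz w hw
      rw [hF] at hz
      simp only [mem_sphere, dist_zero_right] at hz
      simp only [mem_ball, dist_zero_right] at hw
      calc dist z w ≤ ‖z‖ + ‖w‖ := by
            rw [dist_eq_norm]; exact norm_sub_le z w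
        _ ≤ 2 := by linarith
    rcases le_total (infDist x F) (infDist y F) with hmin | hmin
    · rw [min_eq_left hmin]
      obtain ⟨z, hz, hzd⟩ := hscpt.exists_infDist_eq_dist hsne x
      have hzy : infDist y F ≤ dist z y := dist_comm z y ▸ infDist_le_dist_of_mem hz
      have hzy2 : dist z y ≤ 2 := hdist2 z hz y hy
      have hfc : dist x y / (dist x z * dist z y) ≤ c :=
        le_csSup hbdd ⟨z, hz, rfl⟩
      rw [← hzd] at hfc
      have hzypos : 0 < dist z y := lt_of_lt_of_le hdy hzy
      have h1 : dist x y / (infDist x F * 2) ≤ dist x y / (infDist x F * dist z y) := by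
        apply div_le_div_of_nonneg_left dist_nonneg (mul_pos hdx hzypos)
        exact mul_le_mul_of_nonneg_left hzy2 (le_of_lt hdx)
      calc dist x y / infDist x F = 2 * (dist x y / (infDist x F * 2)) := by
            field_simp
        _ ≤ 2 * c := by linarith
    · rw [min_eq_right hmin]
      obtain ⟨z, hz, hzd⟩ := hscpt.exists_infDist_eq_dist hsne y
      have hzx2 : dist x z ≤ 2 := dist_comm x z ▸ hdist2 z hz x hx
      have hfc : dist x y / (dist x z * dist z y) ≤ c :=
        le_csSup hbdd ⟨z, hz, rfl⟩
      rw [dist_comm z y, ← hzd] at hfc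
      have hzxpos : 0 < dist x z := lt_of_lt_of_le hdx (infDist_le_dist_of_mem hz)
      have h1 : dist x y / (2 * infDist y F) ≤ dist x y / (dist x z * infDist y F) := by
        apply div_le_div_of_nonneg_left dist_nonneg (by positivity)
        exact mul_le_mul_of_nonneg_right hzx2 (le_of_lt hdy)
      calc dist x y / infDist y F = 2 * (dist x y / (2 * infDist y F)) := by
            field_simp
        _ ≤ 2 * c := by linarith
  -- c ≥ 0
  have hc0 : 0 ≤ c := by
    obtain ⟨z, hz⟩ := hsne
    have : (0:ℝ) ≤ dist x y / (dist x z * dist z y) := by positivity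
    exact le_trans this (le_csSup hbdd ⟨z, hz, rfl⟩)
  have hmpos : 0 < min (infDist x F) (infDist y F) := lt_min hdx hdy
  have hjle : jMet (Metric.ball (0 : EuclideanSpace ℝ (Fin n)) 1) x y
      ≤ Real.log (1 + 2 * c) := by
    unfold jMet
    apply Real.log_le_log (by positivity)
    linarith
  exact le_trans hjle (key_log c hc0 hc)
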